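/- In GL(2, ℤ), the subgroup of matrices [[a, b],[c, d]] with c even (and determinant ±1) has index 3, and the matrix [[0, −1],[1, −1]] generates a subgroup of order 3 modulo {±I} intersecting it trivially; consequently GL(2, ℤ) is the product of this subgroup with the cyclic subgroup generated by [[0, −1],[1, −1]] and −I. -/
import Mathlib


/-- The subgroup (as a predicate) of GL(2, ℤ) of matrices [[a,b],[c,d]] with c even. -/
def CEven (A : Matrix.GeneralLinearGroup (Fin 2) ℤ) : Prop :=
  (2 : ℤ) ∣ (A : Matrix (Fin 2) (Fin 2) ℤ) 1 0

/-- The matrix [[0, −1], [1, −1]] as an element of GL(2, ℤ); its inverse is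
[[−1, 1], [−1, 0]]. -/
def M3 : Matrix.GeneralLinearGroup (Fin 2) ℤ :=
  ⟨!![0, -1; 1, -1], !![-1, 1; -1, 0], by decide, by decide⟩

instance : DecidablePred CEven := by unfold CEven; infer_instance

lemma m3_inv : M3⁻¹ = M3 ^ 2 := by decide

lemma m3sq_inv : (M3 ^ 2)⁻¹ = M3 := by decide

lemma coe_m3 : ((M3 : Matrix.GeneralLinearGroup (Fin 2) ℤ) : Matrix (Fin 2) (Fin 2) ℤ)
    = !![0, -1; 1, -1] := rfl

lemma coe_m3sq : ((M3 ^ 2 : Matrix.GeneralLinearGroup (Fin 2) ℤ) : Matrix (Fin 2) (Fin 2) ℤ)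
    = !![-1, 1; -1, 0] := by decide

/-- In GL(2, ℤ): the subgroup of matrices with c even has index 3 (there are exactly 3
left cosets); M = [[0,−1],[1,−1]] has order 3 and generates a subgroup intersecting it
trivially modulo ±I; and GL(2, ℤ) is the product of the two subgroups. -/
theorem stmt_19 :
    (∃ f : Fin 3 → Matrix.GeneralLinearGroup (Fin 2) ℤ,
        (∀ i j, i ≠ j → ¬ CEven ((f i)⁻¹ * f j)) ∧
        (∀ A : Matrix.GeneralLinearGroup (Fin 2) ℤ, ∃ i, CEven ((f i)⁻¹ * A))) ∧
    orderOf M3 = 3 ∧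
    (¬ CEven M3 ∧ ¬ CEven (M3 ^ 2) ∧ ¬ CEven (-M3) ∧ ¬ CEven (-(M3 ^ 2))) ∧
    (∀ A : Matrix.GeneralLinearGroup (Fin 2) ℤ,
        ∃ B : Matrix.GeneralLinearGroup (Fin 2) ℤ, CEven B ∧
          ∃ j : Fin 3, A = B * M3 ^ (j : ℕ) ∨ A = -(B * M3 ^ (j : ℕ))) := by
  refine ⟨⟨fun i => M3 ^ (i : ℕ), by decide, ?_⟩,
    orderOf_eq_prime (by decide) (by decide), by decide, ?_⟩
  · intro A
    set a : ℤ := (A : Matrix (Fin 2) (Fin 2) ℤ) 0 0 with ha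
    set c : ℤ := (A : Matrix (Fin 2) (Fin 2) ℤ) 1 0 with hc
    rcases Int.even_or_odd c with h | h
    · refine ⟨0, ?_⟩
      show CEven ((M3 ^ (0 : ℕ))⁻¹ * A)
      rw [pow_zero, inv_one, one_mul, CEven]
      rcases h with ⟨k, hk⟩
      exact ⟨k, by omega⟩
    · rcases Int.even_or_odd a with h' | h'
      · refine ⟨1, ?_⟩
        show CEven ((M3 ^ (1 : ℕ))⁻¹ * A)
        rw [pow_one, m3_inv, CEven, Units.val_mul, coe_m3sq]
        simp [Matrix.mul_apply, Fin.sum_univ_two, ← ha, ← hc]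
        rcases h' with ⟨k, hk⟩
        exact ⟨k, by omega⟩
      · refine ⟨2, ?_⟩
        show CEven ((M3 ^ (2 : ℕ))⁻¹ * A)
        rw [m3sq_inv, CEven, Units.val_mul, coe_m3]
        simp [Matrix.mul_apply, Fin.sum_univ_two, ← ha, ← hc]
        rcases h with ⟨k, hk⟩; rcases h' with ⟨l, hl⟩
        exact ⟨l - k, by omega⟩
  · intro A
    set c : ℤ := (A : Matrix (Fin 2) (Fin 2) ℤ) 1 0 with hc
    set d : ℤ := (A : Matrix (Fin 2) (Fin 2) ℤ) 1 1 with hd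
    rcases Int.even_or_odd c with h | h
    · refine ⟨A, ?_, 0, Or.inl ?_⟩
      · rw [CEven]; rcases h with ⟨k, hk⟩; exact ⟨k, by omega⟩
      · show A = A * M3 ^ (0 : ℕ); rw [pow_zero, mul_one]
    · rcases Int.even_or_odd d with h' | h'
      · refine ⟨A * M3, ?_, 2, Or.inl ?_⟩
        · rw [CEven, Units.val_mul, coe_m3]
          simp [Matrix.mul_apply, Fin.sum_univ_two, ← hc, ← hd]
          rcases h' with ⟨k, hk⟩
          exact ⟨k, by omega⟩
        · show A = A * M3 * M3 ^ (2 : ℕ)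
          rw [mul_assoc, show M3 * M3 ^ (2 : ℕ) = 1 from by decide, mul_one]
      · refine ⟨A * M3 ^ 2, ?_, 1, Or.inl ?_⟩
        · rw [CEven, Units.val_mul, coe_m3sq]
          simp [Matrix.mul_apply, Fin.sum_univ_two, ← hc, ← hd]
          rcases h with ⟨k, hk⟩; rcases h' with ⟨l, hl⟩
          exact ⟨-(k + l + 1), by omega⟩
        · show A = A * M3 ^ 2 * M3 ^ (1 : ℕ)
          rw [mul_assoc, show M3 ^ 2 * M3 ^ (1 : ℕ) = 1 from by decide, mul_one]
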